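/- Let P ⊆ ℝ^{n+1} be a polytope all of whose vertices are 0-1 characteristic vectors of (d+1)-element subsets of {0,…,n}, and suppose every edge of P is parallel to e_i − e_j for some i ≠ j. Then the collection ℬ of (d+1)-element sets B such that e_B is a vertex of P satisfies the basis exchange axiom, hence is the set of bases of a matroid. -/

import Mathlib

/-- The 0-1 characteristic vector `e_B ∈ ℝ^{n+1}` of a subset `B`. -/
def charVec {n : ℕ} (B : Finset (Fin (n + 1))) : Fin (n + 1) → ℝ :=
  fun a => if a ∈ B then 1 else 0

open Set

set_option linter.unusedSectionVars false

section Helpers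

variable {E : Type*} [NormedAddCommGroup E] [NormedSpace ℝ E] [FiniteDimensional ℝ E]

/-- An extreme point of a superset is an extreme point of any subset containing it. -/
lemma extremePoint_of_subset {A B : Set E} {x : E} (hBA : B ⊆ A) (hx : x ∈ B)
    (h : x ∈ Set.extremePoints ℝ A) : x ∈ Set.extremePoints ℝ B :=
  ⟨hx, fun _ hx₁ _ hx₂ hseg => h.2 (hBA hx₁) (hBA hx₂) hseg⟩

/-- The level set of the maximum of a linear functional is an extreme subset. -/
lemma isExtreme_levelSet {A : Set E} (h : E →L[ℝ] ℝ) {M : ℝ} (hub : ∀ x ∈ A, h x ≤ M) :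
    IsExtreme ℝ A {x ∈ A | h x = M} := by
  constructor
  · exact fun x hx => hx.1
  · rintro x₁ hx₁ x₂ hx₂ x ⟨hxA, hxM⟩ ⟨a, b, ha, hb, hab, rfl⟩
    have e1 : h x₁ ≤ M := hub _ hx₁
    have e2 : h x₂ ≤ M := hub _ hx₂
    have key : a * h x₁ + b * h x₂ = M := by
      simpa [map_add, map_smul, smul_eq_mul] using hxM
    have hM : a * M + b * M = M := by rw [← add_mul, hab, one_mul]
    have h1 : h x₁ = M := by
      by_contra hne
      have hlt : h x₁ < M := lt_of_le_of_ne e1 hne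
      linarith [mul_lt_mul_of_pos_left hlt ha, mul_le_mul_of_nonneg_left e2 hb.le]
    have h2 : h x₂ = M := by
      by_contra hne
      have hlt : h x₂ < M := lt_of_le_of_ne e2 hne
      linarith [mul_lt_mul_of_pos_left hlt hb, mul_le_mul_of_nonneg_left e1 ha.le]
    exact ⟨hx₁, h1⟩

lemma convexHull_filter_levelSet (V : Finset E) (h : E →L[ℝ] ℝ) {M : ℝ}
    (hub : ∀ u ∈ V, h u ≤ M) :
    convexHull ℝ ↑(V.filter fun u => h u = M) = {x ∈ convexHull ℝ (V : Set E) | h x = M} := by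
  apply Subset.antisymm
  · apply convexHull_min
    · rintro x hx
      rw [Finset.mem_coe, Finset.mem_filter] at hx
      exact ⟨subset_convexHull ℝ _ (Finset.mem_coe.2 hx.1), hx.2⟩
    · have : Convex ℝ {x : E | h x = M} := by
        intro x hx y hy a b ha hb hab
        simp only [mem_setOf_eq] at *
        simp [map_add, map_smul, smul_eq_mul, hx, hy, ← add_mul, hab]
      exact (convex_convexHull ℝ _).inter this
  · rintro x ⟨hxV, hxM⟩
    rw [Finset.convexHull_eq] at hxV ⊢
    obtain ⟨w, hw0, hw1, hx⟩ := hxV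
    have hcm : h x = ∑ u ∈ V, w u * h u := by
      rw [← hx, Finset.centerMass_eq_of_sum_1 _ _ hw1]
      simp [map_sum, map_smul, smul_eq_mul]
    have hsum0 : ∑ u ∈ V, w u * (M - h u) = 0 := by
      have : ∑ u ∈ V, w u * (M - h u) = (∑ u ∈ V, w u) * M - ∑ u ∈ V, w u * h u := by
        rw [Finset.sum_mul, ← Finset.sum_sub_distrib]
        congr 1 with u
        ring
      rw [this, hw1, ← hcm, hxM]
      ring
    have hzero : ∀ u ∈ V, u ∉ V.filter (fun u => h u = M) → w u = 0 := by
      intro u hu hnu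
      rw [Finset.mem_filter] at hnu
      push_neg at hnu
      have hlt : h u < M := lt_of_le_of_ne (hub u hu) (hnu hu)
      have := (Finset.sum_eq_zero_iff_of_nonneg (fun u hu =>
        mul_nonneg (hw0 u hu) (by linarith [hub u hu]))).1 hsum0 u hu
      rcases mul_eq_zero.1 this with h' | h'
      · exact h'
      · linarith
    refine ⟨w, fun y hy => hw0 y (Finset.filter_subset _ _ hy), ?_, ?_⟩
    · rw [← hw1]
      exact (Finset.sum_subset (Finset.filter_subset _ _) hzero).symm ▸ rfl
    · rw [Finset.centerMass_subset _ (Finset.filter_subset _ _) hzero]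
      exact hx

lemma isExtreme_convexHull_filter (V : Finset E) (h : E →L[ℝ] ℝ) {M : ℝ}
    (hub : ∀ u ∈ V, h u ≤ M) :
    IsExtreme ℝ (convexHull ℝ (V : Set E)) (convexHull ℝ ↑(V.filter fun u => h u = M)) := by
  rw [convexHull_filter_levelSet V h hub]
  apply isExtreme_levelSet
  intro x hx
  have : convexHull ℝ (V : Set E) ⊆ {x | h x ≤ M} := by
    apply convexHull_min
    · exact fun u hu => hub u (Finset.mem_coe.1 hu)
    · exact convex_halfSpace_le (h.toLinearMap.isLinear) M
  exact this hx

end Helpers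

section Main

variable {E : Type*} [NormedAddCommGroup E] [NormedSpace ℝ E] [FiniteDimensional ℝ E]

lemma not_mem_erase_hull {V : Finset E} [DecidableEq E] {v : E} (hv : v ∈ V)
    (hext : v ∈ Set.extremePoints ℝ (convexHull ℝ (V : Set E))) :
    v ∉ convexHull ℝ (↑(V.erase v) : Set E) := by
  intro hmem
  have hsub : convexHull ℝ (↑(V.erase v) : Set E) ⊆ convexHull ℝ (V : Set E) :=
    convexHull_mono (by exact_mod_cast Finset.erase_subset _ _)
  have := extremePoint_of_subset hsub hmem hext
  have hv' : v ∈ (↑(V.erase v) : Set E) := extremePoints_convexHull_subset this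
  simp at hv'

/-- strict separation of an essential point from the rest. -/
lemma exists_separator {V : Finset E} [DecidableEq E] {v : E} (hv : v ∈ V)
    (hvsep : v ∉ convexHull ℝ (↑(V.erase v) : Set E)) :
    ∃ g : E →L[ℝ] ℝ, ∀ u ∈ V, u ≠ v → g u < g v := by
  obtain ⟨g, c, hgc, hcv⟩ := _root_.geometric_hahn_banach_closed_point
    (convex_convexHull ℝ _) ((V.erase v).finite_toSet.isClosed_convexHull ℝ) hvsep
  refine ⟨g, fun u hu hne => ?_⟩
  have : g u < c := hgc u (subset_convexHull ℝ _ (by simp [Finset.mem_erase, hne, hu]))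
  linarith

/-- The `t*` trick : given a strict separator `g` at `v` and any functional `f`,
there is `t` such that `f + t g` is maximized at `v` over `V` and also at some other
point of `V`. -/
lemma exists_tstar {V : Finset E} [DecidableEq E] {v : E} (hv : v ∈ V) (g f : E →L[ℝ] ℝ)
    (hg : ∀ u ∈ V, u ≠ v → g u < g v) (hW : (V.erase v).Nonempty) :
    ∃ t : ℝ, (∀ u ∈ V, f u + t * g u ≤ f v + t * g v) ∧
      (∃ u₀ ∈ V, u₀ ≠ v ∧ f u₀ + t * g u₀ = f v + t * g v) ∧
      (∀ u ∈ V, u ≠ v → (f u - f v) / (g v - g u) ≤ t) := by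
  set r : E → ℝ := fun u => (f u - f v) / (g v - g u) with hr
  refine ⟨(V.erase v).sup' hW r, ?_, ?_, ?_⟩
  · intro u hu
    rcases eq_or_ne u v with rfl | hne
    · exact le_rfl
    · have hD : 0 < g v - g u := by linarith [hg u hu hne]
      have h1 : r u ≤ (V.erase v).sup' hW r := Finset.le_sup' r (Finset.mem_erase.2 ⟨hne, hu⟩)
      rw [hr] at h1
      have h2 := (div_le_iff₀ hD).1 h1
      have h3 : (V.erase v).sup' hW r * (g v - g u)
          = (V.erase v).sup' hW r * g v - (V.erase v).sup' hW r * g u := mul_sub _ _ _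
      linarith
  · obtain ⟨u₀, hu₀, hequ⟩ := Finset.exists_mem_eq_sup' hW r
    have hne : u₀ ≠ v := (Finset.mem_erase.1 hu₀).1
    have hu₀V : u₀ ∈ V := (Finset.mem_erase.1 hu₀).2
    have hD : 0 < g v - g u₀ := by linarith [hg u₀ hu₀V hne]
    refine ⟨u₀, hu₀V, hne, ?_⟩
    have : (f u₀ - f v) / (g v - g u₀) * (g v - g u₀) = f u₀ - f v := div_mul_cancel₀ _ (ne_of_gt hD)
    rw [hequ, hr]
    beta_reduce
    nlinarith [this]
  · intro u hu hne
    exact Finset.le_sup' r (Finset.mem_erase.2 ⟨hne, hu⟩)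

end Main
section MainB

variable {E : Type*} [NormedAddCommGroup E] [NormedSpace ℝ E] [FiniteDimensional ℝ E]

/-- Every vertex of a polytope (with at least two vertices) lies on an edge. -/
lemma exists_adjacent_vertex [DecidableEq E] :
    ∀ (N : ℕ) (V : Finset E) (v : E), V.card ≤ N → v ∈ V →
      v ∈ Set.extremePoints ℝ (convexHull ℝ (V : Set E)) → (∃ u ∈ V, u ≠ v) →
      ∃ w ∈ V, w ≠ v ∧ IsExtreme ℝ (convexHull ℝ (V : Set E)) (segment ℝ v w) := by
  intro N
  induction N with
  | zero =>
    intro V v hcard hv _ _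
    rw [Nat.le_zero, Finset.card_eq_zero] at hcard
    subst hcard; simp at hv
  | succ N ih =>
    intro V v hcard hv hext hex
    by_cases hdeg : ∃ u ∈ V, u ≠ v ∧ u ∈ convexHull ℝ (↑(V.erase u) : Set E)
    · obtain ⟨u, huV, hune, humem⟩ := hdeg
      have hull_eq : convexHull ℝ (↑(V.erase u) : Set E) = convexHull ℝ (V : Set E) := by
        apply Subset.antisymm (convexHull_mono (by exact_mod_cast Finset.erase_subset _ _))
        apply convexHull_min _ (convex_convexHull ℝ _)
        intro x hx
        rcases eq_or_ne x u with rfl | hxu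
        · exact humem
        · exact subset_convexHull ℝ _ (by simp [Finset.mem_erase, hxu, Finset.mem_coe.1 hx])
      have hvE : v ∈ V.erase u := Finset.mem_erase.2 ⟨hune.symm, hv⟩
      have hex' : ∃ u' ∈ V.erase u, u' ≠ v := by
        by_contra hall
        push_neg at hall
        have hsub : (↑(V.erase u) : Set E) ⊆ {v} := fun x hx => hall x (Finset.mem_coe.1 hx)
        have hsub2 : convexHull ℝ (↑(V.erase u) : Set E) ⊆ {v} := by
          have := convexHull_mono hsub (𝕜 := ℝ)
          rwa [convexHull_singleton] at this
        exact hune (hsub2 humem)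
      have hcard' : (V.erase u).card ≤ N := by
        have h1 : (V.erase u).card = V.card - 1 := Finset.card_erase_of_mem huV
        have h2 : 0 < V.card := Finset.card_pos.2 ⟨v, hv⟩
        omega
      obtain ⟨w, hwE, hwne, hwext⟩ := ih (V.erase u) v hcard' hvE
        (by rw [hull_eq]; exact hext) hex'
      exact ⟨w, Finset.mem_of_mem_erase hwE, hwne, by rwa [hull_eq] at hwext⟩
    · push_neg at hdeg
      have hvsep := not_mem_erase_hull hv hext
      obtain ⟨g, hg⟩ := exists_separator hv hvsep
      obtain ⟨u₁, hu₁V, hu₁ne⟩ := hex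
      -- the main construction : a functional which is non-constant on `V` yields an edge
      have main : ∀ (f : E →L[ℝ] ℝ) (t : ℝ), (∀ u ∈ V, f u + t * g u ≤ f v + t * g v) →
          (∃ a ∈ V, a ≠ v ∧ f a + t * g a = f v + t * g v) →
          (∃ u ∈ V, ¬ (f u + t * g u = f v + t * g v)) →
          ∃ w ∈ V, w ≠ v ∧ IsExtreme ℝ (convexHull ℝ (V : Set E)) (segment ℝ v w) := by
        rintro f t hub ⟨a, haV, hane, haeq⟩ ⟨ubad, hubadV, hbad⟩
        have happ : ∀ x, (f + t • g) x = f x + t * g x := fun x => by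
          simp [ContinuousLinearMap.add_apply, ContinuousLinearMap.smul_apply, smul_eq_mul]
        have hvF : v ∈ V.filter (fun u => (f + t • g) u = (f + t • g) v) :=
          Finset.mem_filter.2 ⟨hv, rfl⟩
        have haF : a ∈ V.filter (fun u => (f + t • g) u = (f + t • g) v) :=
          Finset.mem_filter.2 ⟨haV, by rw [happ, happ]; exact haeq⟩
        have hbadF : ubad ∉ V.filter (fun u => (f + t • g) u = (f + t • g) v) := by
          intro hmem
          have := (Finset.mem_filter.1 hmem).2
          rw [happ, happ] at this
          exact hbad this
        have hFsub : V.filter (fun u => (f + t • g) u = (f + t • g) v) ⊆ V :=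
          Finset.filter_subset _ _
        have hsslt : (V.filter (fun u => (f + t • g) u = (f + t • g) v)).card < V.card :=
          Finset.card_lt_card ⟨hFsub, fun hsub => hbadF (hsub hubadV)⟩
        have hub' : ∀ u ∈ V, (f + t • g) u ≤ (f + t • g) v := fun u hu => by
          rw [happ, happ]; exact hub u hu
        have hface := isExtreme_convexHull_filter V (f + t • g) hub'
        have hvFext : v ∈ Set.extremePoints ℝ
            (convexHull ℝ (↑(V.filter (fun u => (f + t • g) u = (f + t • g) v)) : Set E)) :=
          extremePoint_of_subset (convexHull_mono (by exact_mod_cast hFsub))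
            (subset_convexHull ℝ _ (Finset.mem_coe.2 hvF)) hext
        obtain ⟨w, hwF, hwne, hwext⟩ := ih _ v (by omega) hvF hvFext ⟨a, haF, hane⟩
        exact ⟨w, hFsub hwF, hwne, hface.trans hwext⟩
      by_cases h2 : ∃ u₂ ∈ V, u₂ ≠ v ∧ u₂ ≠ u₁
      · obtain ⟨u₂, hu₂V, hu₂ne, hu₂ne₁⟩ := h2
        have hW : (V.erase v).Nonempty := ⟨u₁, Finset.mem_erase.2 ⟨hu₁ne, hu₁V⟩⟩
        obtain ⟨g₁, hg₁⟩ := exists_separator hu₁V (hdeg u₁ hu₁V hu₁ne)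
        obtain ⟨g₂, hg₂⟩ := exists_separator hu₂V (hdeg u₂ hu₂V hu₂ne)
        obtain ⟨t₁, hub₁, ha₁, hrat₁⟩ := exists_tstar hv g g₁ hg hW
        obtain ⟨t₂, hub₂, ha₂, hrat₂⟩ := exists_tstar hv g g₂ hg hW
        by_cases hc1 : ∃ u ∈ V, ¬ (g₁ u + t₁ * g u = g₁ v + t₁ * g v)
        · exact main g₁ t₁ hub₁ ha₁ hc1
        by_cases hc2 : ∃ u ∈ V, ¬ (g₂ u + t₂ * g u = g₂ v + t₂ * g v)
        · exact main g₂ t₂ hub₂ ha₂ hc2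
        exfalso
        push_neg at hc1 hc2
        have ht₁ : 0 < t₁ := by
          have hnum : 0 < g₁ u₁ - g₁ v := by linarith [hg₁ v hv hu₁ne.symm]
          have hden : 0 < g v - g u₁ := by linarith [hg u₁ hu₁V hu₁ne]
          exact lt_of_lt_of_le (div_pos hnum hden) (hrat₁ u₁ hu₁V hu₁ne)
        have ht₂ : 0 < t₂ := by
          have hnum : 0 < g₂ u₂ - g₂ v := by linarith [hg₂ v hv hu₂ne.symm]
          have hden : 0 < g v - g u₂ := by linarith [hg u₂ hu₂V hu₂ne]
          exact lt_of_lt_of_le (div_pos hnum hden) (hrat₂ u₂ hu₂V hu₂ne)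
        have e₁ := hc1 u₁ hu₁V
        have e₁' := hc1 u₂ hu₂V
        have e₂ := hc2 u₁ hu₁V
        have e₂' := hc2 u₂ hu₂V
        have hgg₁ : g₁ u₂ < g₁ u₁ := hg₁ u₂ hu₂V hu₂ne₁
        have hgg₂ : g₂ u₁ < g₂ u₂ := hg₂ u₁ hu₁V (fun h => hu₂ne₁ h.symm)
        have hm₁ : t₁ * (g u₂ - g u₁) = g₁ u₁ - g₁ u₂ := by
          have : t₁ * (g u₂ - g u₁) = t₁ * g u₂ - t₁ * g u₁ := mul_sub _ _ _
          linarith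
        have hm₂ : t₂ * (g u₁ - g u₂) = g₂ u₂ - g₂ u₁ := by
          have : t₂ * (g u₁ - g u₂) = t₂ * g u₁ - t₂ * g u₂ := mul_sub _ _ _
          linarith
        have hd1 : 0 < g u₂ - g u₁ := by
          by_contra hcon
          push_neg at hcon
          nlinarith
        have hd2 : 0 < g u₁ - g u₂ := by
          by_contra hcon
          push_neg at hcon
          nlinarith
        linarith
      · push_neg at h2
        have hVset : (V : Set E) = {v, u₁} := by
          ext x
          simp only [Finset.mem_coe, Set.mem_insert_iff, Set.mem_singleton_iff]
          constructor
          · intro hx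
            rcases eq_or_ne x v with rfl | hne
            · exact Or.inl rfl
            · exact Or.inr (h2 x hx hne)
          · rintro (rfl | rfl)
            exacts [hv, hu₁V]
        refine ⟨u₁, hu₁V, hu₁ne, ?_⟩
        rw [hVset, convexHull_pair]

/-- If `v` is a vertex and `f` is not maximized at `v`, there is an edge from `v`
along which `f` strictly increases. -/
lemma exists_improving_neighbor [DecidableEq E] (V : Finset E) {v : E} (hv : v ∈ V)
    (hext : v ∈ Set.extremePoints ℝ (convexHull ℝ (V : Set E))) (f : E →L[ℝ] ℝ)
    {u₀ : E} (hu₀ : u₀ ∈ V) (hfu : f v < f u₀) :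
    ∃ w ∈ V, f v < f w ∧ IsExtreme ℝ (convexHull ℝ (V : Set E)) (segment ℝ v w) := by
  have hvu₀ : u₀ ≠ v := fun h => by rw [h] at hfu; exact lt_irrefl _ hfu
  have hvsep := not_mem_erase_hull hv hext
  obtain ⟨g, hg⟩ := exists_separator hv hvsep
  have hW : (V.erase v).Nonempty := ⟨u₀, Finset.mem_erase.2 ⟨hvu₀, hu₀⟩⟩
  obtain ⟨t, hub, ⟨a, haV, hane, haeq⟩, hrat⟩ := exists_tstar hv g f hg hW
  have ht : 0 < t := by
    have hnum : 0 < f u₀ - f v := by linarith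
    have hden : 0 < g v - g u₀ := by linarith [hg u₀ hu₀ hvu₀]
    exact lt_of_lt_of_le (div_pos hnum hden) (hrat u₀ hu₀ hvu₀)
  have happ : ∀ x, (f + t • g) x = f x + t * g x := fun x => by
    simp [ContinuousLinearMap.add_apply, ContinuousLinearMap.smul_apply, smul_eq_mul]
  have hvF : v ∈ V.filter (fun u => (f + t • g) u = (f + t • g) v) :=
    Finset.mem_filter.2 ⟨hv, rfl⟩
  have haF : a ∈ V.filter (fun u => (f + t • g) u = (f + t • g) v) :=
    Finset.mem_filter.2 ⟨haV, by rw [happ, happ]; exact haeq⟩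
  have hFsub : V.filter (fun u => (f + t • g) u = (f + t • g) v) ⊆ V :=
    Finset.filter_subset _ _
  have hub' : ∀ u ∈ V, (f + t • g) u ≤ (f + t • g) v := fun u hu => by
    rw [happ, happ]; exact hub u hu
  have hface := isExtreme_convexHull_filter V (f + t • g) hub'
  have hvFext : v ∈ Set.extremePoints ℝ
      (convexHull ℝ (↑(V.filter (fun u => (f + t • g) u = (f + t • g) v)) : Set E)) :=
    extremePoint_of_subset (convexHull_mono (by exact_mod_cast hFsub))
      (subset_convexHull ℝ _ (Finset.mem_coe.2 hvF)) hext
  obtain ⟨w, hwF, hwne, hwext⟩ := exists_adjacent_vertex _ _ v le_rfl hvF hvFext ⟨a, haF, hane⟩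
  refine ⟨w, hFsub hwF, ?_, hface.trans hwext⟩
  have hwV : w ∈ V := hFsub hwF
  have hweq : f w + t * g w = f v + t * g v := by
    have := (Finset.mem_filter.1 hwF).2
    rw [happ, happ] at this
    exact this
  have hgw : g w < g v := hg w hwV hwne
  nlinarith
end MainB


/-- If `P ⊆ ℝ^{n+1}` is the polytope whose vertices are the characteristic vectors
`e_B` of the `(d+1)`-element sets `B ∈ ℬ`, and every edge of `P` (extreme segment
between two vertices) is parallel to `e_i - e_j` for some `i ≠ j`, then `ℬ`
satisfies the basis exchange axiom, hence is the set of bases of a matroid. -/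
theorem matroid_polytope_gives_matroid (n d : ℕ)
    (ℬ : Set (Finset (Fin (n + 1)))) (hne : ℬ.Nonempty)
    (hcard : ∀ B ∈ ℬ, B.card = d + 1)
    (hvert : ∀ B ∈ ℬ, charVec B ∈
      Set.extremePoints ℝ (convexHull ℝ {x | ∃ B' ∈ ℬ, x = charVec B'}))
    (hedge : ∀ B₁ ∈ ℬ, ∀ B₂ ∈ ℬ, B₁ ≠ B₂ →
      IsExtreme ℝ (convexHull ℝ {x | ∃ B' ∈ ℬ, x = charVec B'})
        (segment ℝ (charVec B₁) (charVec B₂)) →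
      ∃ i j : Fin (n + 1), i ≠ j ∧
        ∃ c : ℝ, charVec B₂ - charVec B₁ = c • (Pi.single i (1 : ℝ) - Pi.single j 1)) :
    ∀ B₁ ∈ ℬ, ∀ B₂ ∈ ℬ, ∀ i ∈ B₁ \ B₂,
      ∃ j ∈ B₂ \ B₁, insert j (B₁.erase i) ∈ ℬ := by
  classical
  intro B₁ hB₁ B₂ hB₂ i hi
  rw [Finset.mem_sdiff] at hi
  obtain ⟨hiB₁, hiB₂⟩ := hi
  set V : Finset (Fin (n + 1) → ℝ) := ℬ.toFinite.toFinset.image charVec with hV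
  have hVS : (V : Set (Fin (n + 1) → ℝ)) = {x | ∃ B' ∈ ℬ, x = charVec B'} := by
    ext x
    simp only [hV, Finset.coe_image, Set.Finite.coe_toFinset, Set.mem_image, Set.mem_setOf_eq]
    constructor
    · rintro ⟨B, hB, rfl⟩; exact ⟨B, hB, rfl⟩
    · rintro ⟨B, hB, rfl⟩; exact ⟨B, hB, rfl⟩
  set ε : ℝ := 1 / (n + 2) with hε
  have hn2 : (0:ℝ) < (n:ℝ) + 2 := by positivity
  have hε0 : 0 < ε := by rw [hε]; positivity
  have hε1 : ε < 1 := by rw [hε, div_lt_one hn2]; linarith [(Nat.cast_nonneg n : (0:ℝ) ≤ (n:ℝ))]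
  set wt : Fin (n + 1) → ℝ :=
    fun a => if a = i then -1 else if a ∈ B₁ then 0 else if a ∈ B₂ then -ε else -2 with hwt
  set f : (Fin (n + 1) → ℝ) →L[ℝ] ℝ := ∑ a, wt a • ContinuousLinearMap.proj a with hf
  have hfapply : ∀ x, f x = ∑ a, wt a * x a := fun x => by
    simp [hf, ContinuousLinearMap.sum_apply, ContinuousLinearMap.smul_apply,
      ContinuousLinearMap.proj_apply, smul_eq_mul]
  have hfchar : ∀ B : Finset (Fin (n + 1)), f (charVec B) = ∑ a ∈ B, wt a := by
    intro B
    rw [hfapply]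
    simp only [charVec, mul_ite, mul_one, mul_zero]
    rw [Finset.sum_ite_mem, Finset.univ_inter]
  have hfB₁ : f (charVec B₁) = -1 := by
    rw [hfchar, ← Finset.add_sum_erase _ wt hiB₁]
    have h0 : ∑ a ∈ B₁.erase i, wt a = 0 := Finset.sum_eq_zero (fun a ha => by
      obtain ⟨hne, haB⟩ := Finset.mem_erase.1 ha
      simp [hwt, hne, haB])
    rw [h0]
    simp [hwt]
  have hfB₂ : -1 < f (charVec B₂) := by
    rw [hfchar]
    have hterm : ∀ a ∈ B₂, -ε ≤ wt a := by
      intro a ha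
      have hne : a ≠ i := fun h => hiB₂ (h ▸ ha)
      simp only [hwt, if_neg hne]
      by_cases haB₁ : a ∈ B₁
      · simp only [if_pos haB₁]; linarith
      · simp only [if_neg haB₁, if_pos ha]
        exact le_rfl
    have hsum : (B₂.card : ℝ) * (-ε) ≤ ∑ a ∈ B₂, wt a := by
      calc (B₂.card : ℝ) * (-ε) = ∑ _a ∈ B₂, -ε := by rw [Finset.sum_const, nsmul_eq_mul]
        _ ≤ _ := Finset.sum_le_sum hterm
    have hcard2 : (B₂.card : ℝ) ≤ (n:ℝ) + 1 := by
      have h1 := Finset.card_le_univ B₂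
      rw [Fintype.card_fin] at h1
      exact_mod_cast h1
    have hlt : ((n:ℝ) + 1) * ε < 1 := by
      rw [hε, mul_one_div, div_lt_one hn2]; linarith
    nlinarith [hε0, (Nat.cast_nonneg B₂.card : (0:ℝ) ≤ (B₂.card:ℝ))]
  have hvV : charVec B₁ ∈ V := by
    rw [hV]; exact Finset.mem_image.2 ⟨B₁, (Set.Finite.mem_toFinset _).2 hB₁, rfl⟩
  have hu₀V : charVec B₂ ∈ V := by
    rw [hV]; exact Finset.mem_image.2 ⟨B₂, (Set.Finite.mem_toFinset _).2 hB₂, rfl⟩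
  have hext : charVec B₁ ∈ Set.extremePoints ℝ (convexHull ℝ (V : Set (Fin (n+1) → ℝ))) := by
    rw [hVS]; exact hvert B₁ hB₁
  obtain ⟨x, hxV, hfx, hxext⟩ := exists_improving_neighbor V hvV hext f hu₀V
    (by rw [hfB₁]; exact hfB₂)
  obtain ⟨B', hB't, rfl⟩ := Finset.mem_image.1 (hV ▸ hxV)
  have hB' : B' ∈ ℬ := (Set.Finite.mem_toFinset _).1 hB't
  have hBne : B₁ ≠ B' := by intro h; rw [h] at hfx; exact lt_irrefl _ hfx
  rw [hVS] at hxext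
  obtain ⟨p, q, hpq, c, hdiff⟩ := hedge B₁ hB₁ B' hB' hBne hxext
  -- decode the edge direction
  have hd : ∀ a, charVec B' a - charVec B₁ a
      = c * ((if a = p then (1:ℝ) else 0) - (if a = q then 1 else 0)) := by
    intro a
    have h := congrFun hdiff a
    simpa [Pi.sub_apply, Pi.smul_apply, smul_eq_mul, Pi.single_apply] using h
  have hdp : charVec B' p - charVec B₁ p = c := by
    have := hd p
    rwa [if_pos rfl, if_neg hpq, sub_zero, mul_one] at this
  have hdq : charVec B' q - charVec B₁ q = -c := by
    have := hd q
    rwa [if_neg (Ne.symm hpq), if_pos rfl, zero_sub, mul_neg, mul_one] at this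
  have hchar_iff : ∀ (Bx By : Finset (Fin (n + 1))) (a : Fin (n+1)),
      charVec Bx a = charVec By a → (a ∈ Bx ↔ a ∈ By) := by
    intro Bx By a h
    constructor
    · intro hx; by_contra hy; simp [charVec, hx, hy] at h
    · intro hy; by_contra hx; simp [charVec, hx, hy] at h
  have hother : ∀ a, a ≠ p → a ≠ q → (a ∈ B' ↔ a ∈ B₁) := by
    intro a hap haq
    have h := hd a
    rw [if_neg hap, if_neg haq, sub_zero, mul_zero] at h
    exact hchar_iff B' B₁ a (by linarith)
  have hval : ∀ (B : Finset (Fin (n+1))) (a : Fin (n+1)), a ∈ B → charVec B a = 1 :=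
    fun B a h => if_pos h
  have hval' : ∀ (B : Finset (Fin (n+1))) (a : Fin (n+1)), a ∉ B → charVec B a = 0 :=
    fun B a h => if_neg h
  have hdecode : ∀ a : Fin (n+1), charVec B' a - charVec B₁ a = 1 → a ∈ B' ∧ a ∉ B₁ := by
    intro a h
    by_cases h1 : a ∈ B' <;> by_cases h2 : a ∈ B₁
    · rw [hval _ _ h1, hval _ _ h2] at h; norm_num at h
    · exact ⟨h1, h2⟩
    · rw [hval' _ _ h1, hval _ _ h2] at h; norm_num at h
    · rw [hval' _ _ h1, hval' _ _ h2] at h; norm_num at h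
  have hdecode' : ∀ a : Fin (n+1), charVec B' a - charVec B₁ a = -1 → a ∉ B' ∧ a ∈ B₁ := by
    intro a h
    by_cases h1 : a ∈ B' <;> by_cases h2 : a ∈ B₁
    · rw [hval _ _ h1, hval _ _ h2] at h; norm_num at h
    · rw [hval _ _ h1, hval' _ _ h2] at h; norm_num at h
    · exact ⟨h1, h2⟩
    · rw [hval' _ _ h1, hval' _ _ h2] at h; norm_num at h
  have hfd : f (charVec B') - f (charVec B₁) = c * (wt p - wt q) := by
    have h1 : f (charVec B') - f (charVec B₁) = f (charVec B' - charVec B₁) :=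
      (map_sub f _ _).symm
    rw [h1, hdiff, map_smul, map_sub, smul_eq_mul]
    congr 1
    have hp : f (Pi.single p 1) = wt p := by
      rw [hfapply]
      simp [Pi.single_apply, mul_ite, mul_one, mul_zero, Fintype.sum_ite_eq']
    have hq : f (Pi.single q 1) = wt q := by
      rw [hfapply]
      simp [Pi.single_apply, mul_ite, mul_one, mul_zero, Fintype.sum_ite_eq']
    rw [hp, hq]
  have hfpos : 0 < c * (wt p - wt q) := by rw [← hfd]; linarith
  -- the common final argument
  have conclude : ∀ j k : Fin (n + 1), j ∈ B' → j ∉ B₁ → k ∈ B₁ → k ∉ B' →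
      (∀ a, a ≠ j → a ≠ k → (a ∈ B' ↔ a ∈ B₁)) → (0:ℝ) < wt j - wt k →
      ∃ j' ∈ B₂ \ B₁, insert j' (B₁.erase i) ∈ ℬ := by
    intro j k hjB' hjB₁ hkB₁ hkB' hoth hwpos
    have hji : j ≠ i := fun h => hjB₁ (h ▸ hiB₁)
    have hki : k = i := by
      by_contra hki'
      have hwk : wt k = 0 := by simp [hwt, hki', hkB₁]
      have hwj : wt j < 0 := by
        simp only [hwt, if_neg hji, if_neg hjB₁]
        split_ifs <;> linarith
      linarith
    subst hki
    have hwk : wt k = -1 := by simp [hwt]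
    have hjB₂ : j ∈ B₂ := by
      by_contra hj2
      have hwj : wt j = -2 := by simp [hwt, hji, hjB₁, hj2]
      rw [hwj, hwk] at hwpos; linarith
    refine ⟨j, Finset.mem_sdiff.2 ⟨hjB₂, hjB₁⟩, ?_⟩
    have hBeq : B' = insert j (B₁.erase k) := by
      ext a
      rcases eq_or_ne a j with rfl | haj
      · simp [hjB']
      · rcases eq_or_ne a k with rfl | hak
        · simp [Finset.mem_insert, Finset.mem_erase, hkB', haj]
        · simp only [Finset.mem_insert, Finset.mem_erase]
          rw [hoth a haj hak]
          constructor
          · intro h; exact Or.inr ⟨hak, h⟩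
          · rintro (h | h)
            · exact absurd h haj
            · exact h.2
    rw [← hBeq]; exact hB'
  have hc3 : c = 0 ∨ c = 1 ∨ c = -1 := by
    rw [← hdp]
    by_cases h1 : p ∈ B' <;> by_cases h2 : p ∈ B₁
    · rw [hval _ _ h1, hval _ _ h2]; norm_num
    · rw [hval _ _ h1, hval' _ _ h2]; norm_num
    · rw [hval' _ _ h1, hval _ _ h2]; norm_num
    · rw [hval' _ _ h1, hval' _ _ h2]; norm_num
  rcases hc3 with hc | hc | hc
  · exfalso
    rw [hc, zero_mul] at hfpos
    exact lt_irrefl _ hfpos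
  · obtain ⟨hpB', hpB₁⟩ := hdecode p (by rw [hdp, hc])
    obtain ⟨hqB', hqB₁⟩ := hdecode' q (by rw [hdq, hc])
    exact conclude p q hpB' hpB₁ hqB₁ hqB' hother (by rw [hc, one_mul] at hfpos; exact hfpos)
  · obtain ⟨hpB', hpB₁⟩ := hdecode' p (by rw [hdp, hc])
    obtain ⟨hqB', hqB₁⟩ := hdecode q (by rw [hdq, hc]; norm_num)
    refine conclude q p hqB' hqB₁ hpB₁ hpB' (fun a h1 h2 => hother a h2 h1) ?_
    rw [hc] at hfpos; linarith
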